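/- arXiv:1507.02772 — 4 statements merged into one kernel-verified Lean document; each statement's English description precedes it below -/
import Mathlib

section
/- Let B₁,…,Bₙ and X be d×d symmetric positive definite matrices. The function φ(α) = ‖Log(X^{-1/2} (Σᵢ αᵢ Bᵢ) X^{-1/2})‖_F² is convex on the set 𝒜 = {α ∈ ℝⁿ : αᵢ ≥ 0 for all i, and Σᵢ αᵢ Bᵢ ⪯ X (Löwner order), with Σᵢ αᵢ Bᵢ positive definite}. -/
open Matrix

noncomputable def mlog {d : ℕ} (A : Matrix (Fin d) (Fin d) ℝ) : Matrix (Fin d) (Fin d) ℝ :=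
  cfc Real.log A

noncomputable def msqrt {d : ℕ} (A : Matrix (Fin d) (Fin d) ℝ) : Matrix (Fin d) (Fin d) ℝ :=
  cfc Real.sqrt A

noncomputable def fnorm {d : ℕ} (A : Matrix (Fin d) (Fin d) ℝ) : ℝ :=
  Real.sqrt (Matrix.trace (Aᵀ * A))

noncomputable def riemDist {d : ℕ} (X Y : Matrix (Fin d) (Fin d) ℝ) : ℝ :=
  fnorm (mlog ((msqrt X)⁻¹ * Y * (msqrt X)⁻¹))

section Aux
variable {d : ℕ}

namespace Scratch

lemma contOn (f : ℝ → ℝ) (A : Matrix (Fin d) (Fin d) ℝ) :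
    ContinuousOn f (spectrum ℝ A) := by
  rw [continuousOn_iff_continuous_restrict]; fun_prop

lemma quad_cfc {A : Matrix (Fin d) (Fin d) ℝ} (hA : A.IsHermitian) (g : ℝ → ℝ)
    (u : Fin d → ℝ) :
    u ⬝ᵥ ((hA.cfc g) *ᵥ u) =
      ∑ j, g (hA.eigenvalues j) *
        ((star (hA.eigenvectorUnitary : Matrix (Fin d) (Fin d) ℝ) *ᵥ u) j)^2 := by
  set U : Matrix (Fin d) (Fin d) ℝ := (hA.eigenvectorUnitary : Matrix (Fin d) (Fin d) ℝ)
  have hsU : star U = Uᵀ := conjTranspose_eq_transpose_of_trivial U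
  have h1 : (hA.cfc g) *ᵥ u = U *ᵥ (diagonal (g ∘ hA.eigenvalues) *ᵥ (star U *ᵥ u)) := by
    simp [Matrix.IsHermitian.cfc, mulVec_mulVec, Matrix.mul_assoc]; rfl
  rw [h1, dotProduct_mulVec (R := ℝ) u U, ← mulVec_transpose, ← hsU]
  simp [dotProduct, mulVec_diagonal, mulVec, diagonal]
  congr 1; ext j
  ring

end Scratch

namespace Scratch2
open Scratch

lemma cfc_id' {A : Matrix (Fin d) (Fin d) ℝ} (hA : A.IsHermitian) :
    hA.cfc (fun x => x) = A := by
  rw [← Matrix.IsHermitian.cfc_eq]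
  exact cfc_id ℝ A hA

lemma cfc_one' {A : Matrix (Fin d) (Fin d) ℝ} (hA : A.IsHermitian) :
    hA.cfc (fun _ => 1) = 1 := by
  rw [← Matrix.IsHermitian.cfc_eq]
  exact cfc_const_one ℝ A hA

lemma trace_cfc {A : Matrix (Fin d) (Fin d) ℝ} (hA : A.IsHermitian) (g : ℝ → ℝ) :
    (hA.cfc g).trace = ∑ i, g (hA.eigenvalues i) := by
  rw [Matrix.IsHermitian.cfc, Unitary.conjStarAlgAut_apply, Matrix.trace_mul_cycle]
  rw [show star (hA.eigenvectorUnitary : Matrix (Fin d) (Fin d) ℝ) *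
    (hA.eigenvectorUnitary : Matrix (Fin d) (Fin d) ℝ) = 1 from
    Unitary.star_mul_self_of_mem hA.eigenvectorUnitary.2]
  simp [Matrix.trace, Matrix.diag]

lemma trace_eq_sum_quad (M : Matrix (Fin d) (Fin d) ℝ)
    (U : Matrix (Fin d) (Fin d) ℝ) (hU : U ∈ Matrix.unitaryGroup (Fin d) ℝ) :
    M.trace = ∑ i, (fun k => U k i) ⬝ᵥ (M *ᵥ (fun k => U k i)) := by
  have h : ∑ i, (fun k => U k i) ⬝ᵥ (M *ᵥ (fun k => U k i))
      = (star U * M * U).trace := by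
    simp [Matrix.trace, Matrix.diag, Matrix.mul_apply, dotProduct, mulVec,
      Finset.mul_sum, Finset.sum_mul]
    congr 1; ext i; rw [Finset.sum_comm]; congr 1; ext k; congr 1; ext l; ring
  rw [h, Matrix.trace_mul_cycle, show U * star U = 1 from Unitary.mul_star_self_of_mem hU,
    Matrix.one_mul]

end Scratch2

namespace Scratch3
open Scratch Scratch2

variable {A C : Matrix (Fin d) (Fin d) ℝ}

lemma unit_eigen (hC : C.IsHermitian) (i : Fin d) :
    (⇑(hC.eigenvectorBasis i) : Fin d → ℝ) ⬝ᵥ ⇑(hC.eigenvectorBasis i) = 1 := by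
  have h : (inner ℝ (hC.eigenvectorBasis i) (hC.eigenvectorBasis i) : ℝ) = 1 := by
    simpa using orthonormal_iff_ite.mp hC.eigenvectorBasis.orthonormal i i
  rw [PiLp.inner_apply] at h
  simpa [dotProduct, sq] using h

lemma eigen_quad (hC : C.IsHermitian) (i : Fin d) :
    hC.eigenvalues i = (⇑(hC.eigenvectorBasis i) : Fin d → ℝ) ⬝ᵥ (C *ᵥ ⇑(hC.eigenvectorBasis i)) := by
  rw [hC.mulVec_eigenvectorBasis, dotProduct_smul, unit_eigen hC i]
  simp

lemma col_eq (hC : C.IsHermitian) (i : Fin d) :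
    (fun k => (hC.eigenvectorUnitary : Matrix (Fin d) (Fin d) ℝ) k i)
      = ⇑(hC.eigenvectorBasis i) := by
  funext k; simp

lemma trace_eq_sum_quad' (hC : C.IsHermitian) (M : Matrix (Fin d) (Fin d) ℝ) :
    M.trace = ∑ i, (⇑(hC.eigenvectorBasis i) : Fin d → ℝ) ⬝ᵥ (M *ᵥ ⇑(hC.eigenvectorBasis i)) := by
  rw [trace_eq_sum_quad M _ hC.eigenvectorUnitary.2]
  exact Finset.sum_congr rfl fun i _ => by rw [col_eq hC i]

lemma jensen_quad (hA : A.IsHermitian) {s : Set ℝ} {g : ℝ → ℝ}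
    (hg : ConvexOn ℝ s g) (hev : ∀ i, hA.eigenvalues i ∈ s)
    (u : Fin d → ℝ) (hu : u ⬝ᵥ u = 1) :
    u ⬝ᵥ (A *ᵥ u) ∈ s ∧ g (u ⬝ᵥ (A *ᵥ u)) ≤ u ⬝ᵥ ((hA.cfc g) *ᵥ u) := by
  set c : Fin d → ℝ := star (hA.eigenvectorUnitary : Matrix (Fin d) (Fin d) ℝ) *ᵥ u with hc
  have hsum1 : ∑ j, (c j)^2 = 1 := by
    have := quad_cfc hA (fun _ => 1) u
    rw [cfc_one' hA, Matrix.one_mulVec, hu] at this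
    simpa using this.symm
  have hAq : u ⬝ᵥ (A *ᵥ u) = ∑ j, (c j)^2 • hA.eigenvalues j := by
    have := quad_cfc hA (fun x => x) u
    rw [cfc_id' hA] at this
    rw [this]
    exact Finset.sum_congr rfl fun j _ => by simp [mul_comm, hc]
  have hmem : u ⬝ᵥ (A *ᵥ u) ∈ s := by
    rw [hAq]
    exact hg.1.sum_mem (fun j _ => sq_nonneg _) (by simpa using hsum1) (fun j _ => hev j)
  refine ⟨hmem, ?_⟩
  have hle := hg.map_sum_le (t := Finset.univ) (fun j _ => sq_nonneg (c j))
    (by simpa using hsum1) (fun j _ => hev j)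
  rw [← hAq] at hle
  refine hle.trans_eq ?_
  rw [quad_cfc hA g u]
  exact Finset.sum_congr rfl fun j _ => by simp [mul_comm, hc]

end Scratch3

namespace Scratch4
open Scratch Scratch2 Scratch3

lemma isHermitian_smul {A : Matrix (Fin d) (Fin d) ℝ} (hA : A.IsHermitian) (c : ℝ) :
    (c • A).IsHermitian := by
  unfold Matrix.IsHermitian at *
  rw [conjTranspose_smul, hA]
  simp

lemma peierls {A B : Matrix (Fin d) (Fin d) ℝ} (hA : A.IsHermitian) (hB : B.IsHermitian)
    {s : Set ℝ} {g : ℝ → ℝ} (hg : ConvexOn ℝ s g)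
    (hevA : ∀ i, hA.eigenvalues i ∈ s) (hevB : ∀ i, hB.eigenvalues i ∈ s)
    {a b : ℝ} (ha : 0 ≤ a) (hb : 0 ≤ b) (hab : a + b = 1) :
    (cfc g (a • A + b • B)).trace ≤ a * (cfc g A).trace + b * (cfc g B).trace := by
  have hC : (a • A + b • B).IsHermitian := (isHermitian_smul hA a).add (isHermitian_smul hB b)
  rw [Matrix.IsHermitian.cfc_eq hC, Matrix.IsHermitian.cfc_eq hA, Matrix.IsHermitian.cfc_eq hB,
    trace_cfc hC]
  rw [trace_eq_sum_quad' hC (hA.cfc g), trace_eq_sum_quad' hC (hB.cfc g)]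
  rw [Finset.mul_sum, Finset.mul_sum, ← Finset.sum_add_distrib]
  refine Finset.sum_le_sum fun i _ => ?_
  set u : Fin d → ℝ := ⇑(hC.eigenvectorBasis i) with hu
  have hunit : u ⬝ᵥ u = 1 := unit_eigen hC i
  have hJA := jensen_quad hA hg hevA u hunit
  have hJB := jensen_quad hB hg hevB u hunit
  have hquad : hC.eigenvalues i = a * (u ⬝ᵥ (A *ᵥ u)) + b * (u ⬝ᵥ (B *ᵥ u)) := by
    rw [eigen_quad hC i]
    simp [Matrix.add_mulVec, Matrix.smul_mulVec, dotProduct_add, dotProduct_smul, hu]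
  have hconv : g (hC.eigenvalues i) ≤ a * g (u ⬝ᵥ (A *ᵥ u)) + b * g (u ⬝ᵥ (B *ᵥ u)) := by
    rw [hquad]
    exact hg.2 hJA.1 hJB.1 ha hb hab
  refine hconv.trans ?_
  gcongr
  · exact hJA.2
  · exact hJB.2

end Scratch4

namespace Scratch5

lemma convexOn_log_sq : ConvexOn ℝ (Set.Ioc (0:ℝ) 1) (fun t => (Real.log t)^2) := by
  refine ⟨convex_Ioc 0 1, ?_⟩
  intro x hx y hy a b ha hb hab
  have hz : a • x + b • y ∈ Set.Ioc (0:ℝ) 1 := (convex_Ioc 0 1) hx hy ha hb hab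
  have hlx : Real.log x ≤ 0 := Real.log_nonpos hx.1.le hx.2
  have hly : Real.log y ≤ 0 := Real.log_nonpos hy.1.le hy.2
  have hlz : Real.log (a • x + b • y) ≤ 0 := Real.log_nonpos hz.1.le hz.2
  have hconc : a • Real.log x + b • Real.log y ≤ Real.log (a • x + b • y) :=
    strictConcaveOn_log_Ioi.concaveOn.2 hx.1 hy.1 ha hb hab
  have key : -Real.log (a • x + b • y) ≤ a * (-Real.log x) + b * (-Real.log y) := by
    simp only [smul_eq_mul] at hconc ⊢
    linarith
  have hsq : (-Real.log (a • x + b • y))^2 ≤ (a * (-Real.log x) + b * (-Real.log y))^2 :=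
    pow_le_pow_left₀ (by linarith) key 2
  have hsq2 : (a • (-Real.log x) + b • (-Real.log y))^2
      ≤ a * (-Real.log x)^2 + b * (-Real.log y)^2 :=
    (Even.convexOn_pow (by norm_num : Even 2)).2 (Set.mem_univ _) (Set.mem_univ _) ha hb hab
  simp only [smul_eq_mul] at hsq2 ⊢
  calc (Real.log (a * x + b * y))^2 = (-Real.log (a • x + b • y))^2 := by
        simp [neg_pow]
    _ ≤ (a * (-Real.log x) + b * (-Real.log y))^2 := hsq
    _ ≤ a * (-Real.log x)^2 + b * (-Real.log y)^2 := by simpa using hsq2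
    _ = a * (Real.log x)^2 + b * (Real.log y)^2 := by ring

end Scratch5

namespace Scratch6
open Scratch Scratch2 Scratch3 Scratch4

variable {P Q M : Matrix (Fin d) (Fin d) ℝ}

lemma posSemidef_smul (hP : P.PosSemidef) {c : ℝ} (hc : 0 ≤ c) : (c • P).PosSemidef := by
  refine PosSemidef.of_dotProduct_mulVec_nonneg (isHermitian_smul hP.1 c) fun x => ?_
  rw [smul_mulVec, dotProduct_smul, smul_eq_mul]
  exact mul_nonneg hc (hP.dotProduct_mulVec_nonneg x)

lemma posDef_smul (hP : P.PosDef) {c : ℝ} (hc : 0 < c) : (c • P).PosDef := by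
  refine PosDef.of_dotProduct_mulVec_pos (isHermitian_smul hP.1 c) fun x hx => ?_
  rw [smul_mulVec, dotProduct_smul, smul_eq_mul]
  exact mul_pos hc (hP.dotProduct_mulVec_pos hx)

lemma posDef_conj (hP : P.PosDef) (hQ : IsUnit Q.det) : (Qᴴ * P * Q).PosDef := by
  refine PosDef.of_dotProduct_mulVec_pos (isHermitian_conjTranspose_mul_mul Q hP.1) fun x hx => ?_
  have hx' : Q *ᵥ x ≠ 0 := by
    intro h
    exact hx (Matrix.mulVec_injective_iff_isUnit.mpr (isUnit_iff_isUnit_det _ |>.mpr hQ)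
      |>.eq_iff.mp (by simpa using h))
  have := hP.dotProduct_mulVec_pos hx'
  have e : star x ⬝ᵥ ((Qᴴ * P * Q) *ᵥ x) = star (Q *ᵥ x) ⬝ᵥ (P *ᵥ (Q *ᵥ x)) := by
    rw [star_mulVec, Matrix.mulVec_mulVec, dotProduct_mulVec, dotProduct_mulVec,
      Matrix.vecMul_vecMul, Matrix.mul_assoc]
  rw [e]
  exact this

lemma eigenvalues_le_one (hM : M.IsHermitian) (h1 : (1 - M).PosSemidef) (i : Fin d) :
    hM.eigenvalues i ≤ 1 := by
  set u : Fin d → ℝ := ⇑(hM.eigenvectorBasis i)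
  have h := h1.dotProduct_mulVec_nonneg u
  have hstar : star u = u := by simp
  rw [hstar, Matrix.sub_mulVec, dotProduct_sub, Matrix.one_mulVec, unit_eigen hM i,
    ← eigen_quad hM i] at h
  linarith

end Scratch6

namespace Scratch7
open Scratch Scratch2 Scratch3 Scratch4 Scratch6

variable {X M : Matrix (Fin d) (Fin d) ℝ}

lemma phi_eq (hM : M.IsHermitian) :
    (fnorm (mlog M))^2 = (cfc (fun t => (Real.log t)^2) M).trace := by
  have hL : (mlog M).IsHermitian := cfc_predicate Real.log M
  have ht : (mlog M)ᵀ = mlog M := by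
    rw [← conjTranspose_eq_transpose_of_trivial]; exact hL
  have hmul : (mlog M) * (mlog M) = cfc (fun t => (Real.log t)^2) M := by
    rw [mlog, ← cfc_mul _ _ M (contOn _ M) (contOn _ M)]
    exact cfc_congr fun x _ => (pow_two _).symm
  have htr : (cfc (fun t => (Real.log t)^2) M).trace
      = ∑ i, (Real.log (hM.eigenvalues i))^2 := by
    rw [Matrix.IsHermitian.cfc_eq hM, trace_cfc]
  have hnn : 0 ≤ ((mlog M)ᵀ * (mlog M)).trace := by
    rw [ht, hmul, htr]
    exact Finset.sum_nonneg fun i _ => sq_nonneg _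
  rw [fnorm, Real.sq_sqrt hnn, ht, hmul]

lemma msqrt_mul_self (hX : X.PosDef) : msqrt X * msqrt X = X := by
  have hsp : ∀ x ∈ spectrum ℝ X, 0 ≤ x := by
    intro x hx
    rw [hX.1.spectrum_real_eq_range_eigenvalues] at hx
    obtain ⟨i, rfl⟩ := hx
    exact (hX.eigenvalues_pos i).le
  calc msqrt X * msqrt X = cfc (fun x => Real.sqrt x * Real.sqrt x) X := by
        rw [msqrt, ← cfc_mul _ _ X (contOn _ X) (contOn _ X)]
    _ = cfc (fun x => x) X := cfc_congr fun x hx => Real.mul_self_sqrt (hsp x hx)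
    _ = X := cfc_id ℝ X hX.1

end Scratch7

end Aux

open Scratch Scratch2 Scratch3 Scratch4 Scratch5 Scratch6 Scratch7 in
theorem stmt_5 {d n : ℕ} (B : Fin n → Matrix (Fin d) (Fin d) ℝ)
    (X : Matrix (Fin d) (Fin d) ℝ)
    (hB : ∀ i, (B i).PosDef) (hX : X.PosDef) :
    ConvexOn ℝ
      {α : Fin n → ℝ | (∀ i, 0 ≤ α i) ∧
        (X - ∑ i, α i • B i).PosSemidef ∧ (∑ i, α i • B i).PosDef}
      (fun α => (fnorm (mlog ((msqrt X)⁻¹ * (∑ i, α i • B i) * (msqrt X)⁻¹)))^2) := by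
  set S : (Fin n → ℝ) → Matrix (Fin d) (Fin d) ℝ := fun α => ∑ i, α i • B i with hS
  set P : Matrix (Fin d) (Fin d) ℝ := msqrt X with hP
  set Y : Matrix (Fin d) (Fin d) ℝ := P⁻¹ with hY
  have hPsd := hX.posSemidef
  have hPP : P * P = X := msqrt_mul_self hX
  have hPH : P.IsHermitian := cfc_predicate Real.sqrt X
  have hPdet : IsUnit P.det := by
    have h2 : P.det * P.det = X.det := by rw [← Matrix.det_mul, hPP]
    refine isUnit_iff_ne_zero.mpr fun h => ?_
    rw [h, mul_zero] at h2
    exact hX.det_pos.ne' h2.symm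
  have hYH : Y.IsHermitian := hPH.inv
  have hYdet : IsUnit Y.det := by
    rw [hY, Matrix.det_nonsing_inv, Ring.inverse_eq_inv']
    exact isUnit_iff_ne_zero.mpr (inv_ne_zero (isUnit_iff_ne_zero.mp hPdet))
  have hYXY : Y * X * Y = 1 := by
    rw [← hPP, hY, ← Matrix.mul_assoc, Matrix.nonsing_inv_mul P hPdet, Matrix.one_mul,
      Matrix.mul_nonsing_inv P hPdet]
  have hSH : ∀ α, (S α).IsHermitian := by
    intro α
    unfold Matrix.IsHermitian
    rw [conjTranspose_sum]
    exact Finset.sum_congr rfl fun i _ => isHermitian_smul (hB i).1 (α i)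
  have hMH : ∀ α, (Y * S α * Y).IsHermitian := by
    intro α
    have h := isHermitian_conjTranspose_mul_mul Y (hSH α)
    rwa [hYH.eq] at h
  have hMpd : ∀ α, (S α).PosDef → (Y * S α * Y).PosDef := by
    intro α hα
    have h := posDef_conj hα hYdet
    rwa [hYH.eq] at h
  have hMub : ∀ α, (X - S α).PosSemidef → (1 - Y * S α * Y).PosSemidef := by
    intro α hα
    have h := hα.conjTranspose_mul_mul_same Y
    rwa [hYH.eq, Matrix.mul_sub, Matrix.sub_mul, hYXY] at h
  have heig : ∀ α, (X - S α).PosSemidef → (hMα : (S α).PosDef) →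
      ∀ i, (hMH α).eigenvalues i ∈ Set.Ioc (0:ℝ) 1 := by
    intro α h1 h2 i
    exact ⟨(hMpd α h2).eigenvalues_pos i, eigenvalues_le_one (hMH α) (hMub α h1) i⟩
  have hlin : ∀ (a b : ℝ) (α β : Fin n → ℝ),
      S (a • α + b • β) = a • S α + b • S β := by
    intro a b α β
    rw [hS]
    simp only [Pi.add_apply, Pi.smul_apply, smul_eq_mul, add_smul,
      Finset.sum_add_distrib, Finset.smul_sum, smul_smul]
  have hMlin : ∀ (a b : ℝ) (α β : Fin n → ℝ),
      Y * S (a • α + b • β) * Y = a • (Y * S α * Y) + b • (Y * S β * Y) := by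
    intro a b α β
    rw [hlin]
    simp only [Matrix.mul_add, Matrix.add_mul, smul_mul_assoc, mul_smul_comm]
  constructor
  · -- convexity of the set
    intro α hα β hβ a b ha hb hab
    obtain ⟨hα1, hα2, hα3⟩ := hα
    obtain ⟨hβ1, hβ2, hβ3⟩ := hβ
    refine ⟨fun i => add_nonneg (mul_nonneg ha (hα1 i)) (mul_nonneg hb (hβ1 i)), ?_, ?_⟩
    · have h : X - S (a • α + b • β) = a • (X - S α) + b • (X - S β) := by
        have hX' : a • X + b • X = X := by rw [← add_smul, hab, one_smul]
        rw [hlin, smul_sub, smul_sub]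
        nth_rewrite 1 [← hX']
        abel
      rw [show (∑ i, (a • α + b • β) i • B i) = S (a • α + b • β) from rfl, h]
      exact (posSemidef_smul hα2 ha).add (posSemidef_smul hβ2 hb)
    · rw [show (∑ i, (a • α + b • β) i • B i) = S (a • α + b • β) from rfl, hlin]
      rcases eq_or_lt_of_le ha with h | h
      · have hb1 : b = 1 := by linarith
        simp [← h, hb1, hβ3]; exact hβ3
      · exact (posDef_smul hα3 h).add_posSemidef (posSemidef_smul hβ3.posSemidef hb)
  · -- the inequality
    intro α hα β hβ a b ha hb hab
    obtain ⟨hα1, hα2, hα3⟩ := hα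
    obtain ⟨hβ1, hβ2, hβ3⟩ := hβ
    simp only [smul_eq_mul]
    have key := peierls (hMH α) (hMH β) convexOn_log_sq
      (heig α hα2 hα3) (heig β hβ2 hβ3) ha hb hab
    calc fnorm (mlog ((msqrt X)⁻¹ * (∑ i, (a • α + b • β) i • B i) * (msqrt X)⁻¹)) ^ 2
        = (cfc (fun t => (Real.log t)^2)
            (a • (Y * S α * Y) + b • (Y * S β * Y))).trace := by
          rw [← hMlin a b α β]
          exact phi_eq (hMH _)
      _ ≤ a * (cfc (fun t => (Real.log t)^2) (Y * S α * Y)).trace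
            + b * (cfc (fun t => (Real.log t)^2) (Y * S β * Y)).trace := key
      _ = a * fnorm (mlog ((msqrt X)⁻¹ * (∑ i, α i • B i) * (msqrt X)⁻¹)) ^ 2
            + b * fnorm (mlog ((msqrt X)⁻¹ * (∑ i, β i • B i) * (msqrt X)⁻¹)) ^ 2 := by
          rw [← phi_eq (hMH α), ← phi_eq (hMH β)]
end

section
/- The matrix logarithm is operator monotone on positive definite matrices: if A, B are symmetric positive definite d×d matrices with A ⪯ B, then Log(A) ⪯ Log(B). -/
open Matrix

section Aux
open Set MeasureTheory Filter Matrix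

namespace StmtAux

lemma hderiv_aux (a : ℝ) (ha : 0 < a) : ∀ t ∈ Ici (0:ℝ),
    HasDerivAt (fun t => Real.log (1+t) - Real.log (a+t)) ((1+t)⁻¹ - (a+t)⁻¹) t := by
  intro t ht
  have h1 : (0:ℝ) < 1 + t := by linarith [ht.out]
  have h2 : (0:ℝ) < a + t := by linarith [ht.out]
  have d1 : HasDerivAt (fun t : ℝ => Real.log (1+t)) ((1+t)⁻¹) t := by
    simpa using ((hasDerivAt_id t).const_add 1).log h1.ne'
  have d2 : HasDerivAt (fun t : ℝ => Real.log (a+t)) ((a+t)⁻¹) t := by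
    simpa using ((hasDerivAt_id t).const_add a).log h2.ne'
  exact d1.sub d2

lemma tendsto_aux (a : ℝ) (ha : 0 < a) :
    Tendsto (fun t => Real.log (1+t) - Real.log (a+t)) atTop (nhds 0) := by
  have h : ∀ᶠ t in atTop, Real.log (1+t) - Real.log (a+t)
      = Real.log ((1+t)/(a+t)) := by
    filter_upwards [eventually_gt_atTop (0:ℝ)] with t ht
    rw [Real.log_div (by linarith) (by linarith)]
  rw [Filter.tendsto_congr' h]
  have hlim : Tendsto (fun t : ℝ => (1+t)/(a+t)) atTop (nhds 1) := by
    have h2 : ∀ᶠ t in atTop, (1+t)/(a+t) = (t⁻¹+1)/(a*t⁻¹+1) := by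
      filter_upwards [eventually_gt_atTop (0:ℝ)] with t ht
      have h3 : (0:ℝ) < a*t⁻¹+1 := by positivity
      have h4 : (0:ℝ) < a + t := by linarith
      field_simp
    rw [Filter.tendsto_congr' h2]
    have := (tendsto_inv_atTop_zero.add (tendsto_const_nhds (x := (1:ℝ)))).div
      ((tendsto_inv_atTop_zero.const_mul a).add (tendsto_const_nhds (x := (1:ℝ))))
      (by norm_num)
    simpa [Pi.div_def] using this
  simpa [Function.comp_def] using (Real.continuousAt_log one_ne_zero).tendsto.comp hlim

lemma scalar_int (a : ℝ) (ha : 0 < a) :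
    IntegrableOn (fun t => (1+t)⁻¹ - (a+t)⁻¹) (Ioi 0) ∧
    ∫ t in Ioi (0:ℝ), ((1+t)⁻¹ - (a+t)⁻¹) = Real.log a := by
  have hderiv := hderiv_aux a ha
  have htt := tendsto_aux a ha
  have hval : (0:ℝ) - (Real.log (1+0) - Real.log (a+0)) = Real.log a := by simp
  rcases le_or_gt 1 a with h | h
  · have sign : ∀ t ∈ Ioi (0:ℝ), 0 ≤ (1+t)⁻¹ - (a+t)⁻¹ := by
      intro t ht
      have : (0:ℝ) < 1 + t := by linarith [ht.out]
      have := inv_anti₀ this (by linarith : 1 + t ≤ a + t)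
      linarith
    exact ⟨integrableOn_Ioi_deriv_of_nonneg' hderiv sign htt,
      by rw [integral_Ioi_of_hasDerivAt_of_nonneg' hderiv sign htt]; simpa using hval⟩
  · have sign : ∀ t ∈ Ioi (0:ℝ), (1+t)⁻¹ - (a+t)⁻¹ ≤ 0 := by
      intro t ht
      have : (0:ℝ) < a + t := by linarith [ht.out]
      have := inv_anti₀ this (by linarith : a + t ≤ 1 + t)
      linarith
    exact ⟨integrableOn_Ioi_deriv_of_nonpos' hderiv sign htt,
      by rw [integral_Ioi_of_hasDerivAt_of_nonpos' hderiv sign htt]; simpa using hval⟩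

variable {d : ℕ}

lemma pair_conj (U : Matrix (Fin d) (Fin d) ℝ) (g : Fin d → ℝ) (x : Fin d → ℝ) :
    x ⬝ᵥ ((U * diagonal g * star U) *ᵥ x)
      = ∑ i, g i * ((star U *ᵥ x) i)^2 := by
  rw [← mulVec_mulVec, ← mulVec_mulVec]
  rw [Matrix.dotProduct_mulVec x U]
  have : x ᵥ* U = star U *ᵥ x := by
    ext i
    simp [vecMul, mulVec, dotProduct, conjTranspose_apply, mul_comm]
  rw [this]
  simp [dotProduct, mulVec_diagonal]
  congr 1; ext i; ring

section spectral
variable {A : Matrix (Fin d) (Fin d) ℝ}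

lemma spec_real (h : A.IsHermitian) :
    A = (h.eigenvectorUnitary : Matrix (Fin d) (Fin d) ℝ)
      * diagonal h.eigenvalues * star (h.eigenvectorUnitary : Matrix (Fin d) (Fin d) ℝ) := by
  have := h.spectral_theorem
  rw [RCLike.ofReal_real_eq_id] at this
  simpa [Function.id_comp] using this

lemma conj_add_smul (h : A.IsHermitian) (t : ℝ) :
    A + t • (1 : Matrix (Fin d) (Fin d) ℝ)
      = (h.eigenvectorUnitary : Matrix (Fin d) (Fin d) ℝ)
        * diagonal (fun i => h.eigenvalues i + t)
        * star (h.eigenvectorUnitary : Matrix (Fin d) (Fin d) ℝ) := by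
  set U := (h.eigenvectorUnitary : Matrix (Fin d) (Fin d) ℝ)
  have hU : U * star U = 1 := Unitary.coe_mul_star_self _
  have h1 : diagonal (fun i => h.eigenvalues i + t)
      = diagonal h.eigenvalues + t • (1 : Matrix (Fin d) (Fin d) ℝ) := by
    rw [← diagonal_one, ← diagonal_smul, ← diagonal_add]
    simp [diagonal_smul, Pi.smul_def, smul_eq_mul]
  rw [h1, mul_add, add_mul]
  congr 1
  · exact spec_real h
  · rw [Matrix.mul_smul, mul_one, smul_mul_assoc, hU]

lemma inv_conj (h : A.IsHermitian) (g : Fin d → ℝ) (hg : ∀ i, g i ≠ 0) :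
    ((h.eigenvectorUnitary : Matrix (Fin d) (Fin d) ℝ) * diagonal g
      * star (h.eigenvectorUnitary : Matrix (Fin d) (Fin d) ℝ))⁻¹
    = (h.eigenvectorUnitary : Matrix (Fin d) (Fin d) ℝ) * diagonal (fun i => (g i)⁻¹)
      * star (h.eigenvectorUnitary : Matrix (Fin d) (Fin d) ℝ) := by
  apply Matrix.inv_eq_right_inv
  set U := (h.eigenvectorUnitary : Matrix (Fin d) (Fin d) ℝ)
  have hU : star U * U = 1 := Unitary.coe_star_mul_self _
  have hU2 : U * star U = 1 := Unitary.coe_mul_star_self _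
  calc U * diagonal g * star U * (U * diagonal (fun i => (g i)⁻¹) * star U)
      = U * (diagonal g * (star U * U) * diagonal (fun i => (g i)⁻¹)) * star U := by
        simp only [mul_assoc]
    _ = 1 := by
        rw [hU, mul_one, diagonal_mul_diagonal]
        have : (fun i => g i * (g i)⁻¹) = fun _ => (1:ℝ) := by
          ext i; exact mul_inv_cancel₀ (hg i)
        rw [this, diagonal_one, mul_one, hU2]

lemma mlog_eq (h : A.IsHermitian) :
    cfc Real.log A = (h.eigenvectorUnitary : Matrix (Fin d) (Fin d) ℝ)
      * diagonal (fun i => Real.log (h.eigenvalues i))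
      * star (h.eigenvectorUnitary : Matrix (Fin d) (Fin d) ℝ) := by
  rw [h.cfc_eq]
  unfold Matrix.IsHermitian.cfc
  rw [RCLike.ofReal_real_eq_id]
  congr 1

end spectral

section antitone
variable {A B : Matrix (Fin d) (Fin d) ℝ}

lemma symm_pair (h : A.IsHermitian) (u v : Fin d → ℝ) :
    u ⬝ᵥ (A *ᵥ v) = v ⬝ᵥ (A *ᵥ u) := by
  have hsymm : Aᵀ = A := by
    ext i j
    have := congrFun (congrFun h i) j
    simpa [conjTranspose_apply] using this
  calc u ⬝ᵥ (A *ᵥ v) = (u ᵥ* A) ⬝ᵥ v := dotProduct_mulVec u A v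
    _ = (Aᵀ *ᵥ u) ⬝ᵥ v := by rw [mulVec_transpose]
    _ = (A *ᵥ u) ⬝ᵥ v := by rw [hsymm]
    _ = v ⬝ᵥ (A *ᵥ u) := dotProduct_comm _ _

lemma cs_psd (hA : A.PosSemidef) (u v : Fin d → ℝ) :
    (u ⬝ᵥ (A *ᵥ v))^2 ≤ (u ⬝ᵥ (A *ᵥ u)) * (v ⬝ᵥ (A *ᵥ v)) := by
  have key : ∀ r : ℝ, 0 ≤ (v ⬝ᵥ (A *ᵥ v)) * (r * r) + (2 * (u ⬝ᵥ (A *ᵥ v))) * r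
      + (u ⬝ᵥ (A *ᵥ u)) := by
    intro r
    have h0 := hA.dotProduct_mulVec_nonneg (u + r • v)
    rw [star_trivial] at h0
    have hexp : (u + r • v) ⬝ᵥ (A *ᵥ (u + r • v))
        = (v ⬝ᵥ (A *ᵥ v)) * (r * r) + (2 * (u ⬝ᵥ (A *ᵥ v))) * r + (u ⬝ᵥ (A *ᵥ u)) := by
      rw [mulVec_add, dotProduct_add, add_dotProduct, add_dotProduct,
        mulVec_smul, dotProduct_smul, smul_dotProduct, smul_dotProduct,
        dotProduct_smul, symm_pair hA.1 v u]
      simp [smul_eq_mul]; ring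
    linarith [hexp ▸ h0]
  have := discrim_le_zero key
  rw [discrim] at this
  nlinarith [this]

lemma inv_pair_antitone (hA : A.PosDef) (hB : B.PosDef) (hAB : (B - A).PosSemidef)
    (x : Fin d → ℝ) : x ⬝ᵥ (B⁻¹ *ᵥ x) ≤ x ⬝ᵥ (A⁻¹ *ᵥ x) := by
  set u := A⁻¹ *ᵥ x with hu
  set v := B⁻¹ *ᵥ x with hv
  have hAu : A *ᵥ u = x := by
    rw [hu, mulVec_mulVec, Matrix.mul_nonsing_inv _ (isUnit_iff_ne_zero.mpr hA.det_pos.ne'), one_mulVec]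
  have hBv : B *ᵥ v = x := by
    rw [hv, mulVec_mulVec, Matrix.mul_nonsing_inv _ (isUnit_iff_ne_zero.mpr hB.det_pos.ne'), one_mulVec]
  set s := x ⬝ᵥ v with hs
  set t := x ⬝ᵥ u with ht
  have hsnn : 0 ≤ s := by
    have := (hB.inv).posSemidef.dotProduct_mulVec_nonneg x
    rwa [star_trivial] at this
  have htnn : 0 ≤ t := by
    have := (hA.inv).posSemidef.dotProduct_mulVec_nonneg x
    rwa [star_trivial] at this
  have hvAv_le : v ⬝ᵥ (A *ᵥ v) ≤ s := by
    have h2 := hAB.dotProduct_mulVec_nonneg v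
    rw [star_trivial, sub_mulVec, dotProduct_sub, hBv] at h2
    have : v ⬝ᵥ x = s := by rw [hs, dotProduct_comm]
    linarith
  have hcs := cs_psd hA.posSemidef u v
  have huAu : u ⬝ᵥ (A *ᵥ u) = t := by rw [hAu, ht, dotProduct_comm]
  have huAv : u ⬝ᵥ (A *ᵥ v) = s := by
    rw [symm_pair hA.1 u v, hAu, hs, dotProduct_comm]
  rw [huAu, huAv] at hcs
  have hvAv_nn : 0 ≤ v ⬝ᵥ (A *ᵥ v) := by
    have := hA.posSemidef.dotProduct_mulVec_nonneg v; rwa [star_trivial] at this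
  have h3 : s^2 ≤ t * s := le_trans hcs (by nlinarith)
  rcases hsnn.eq_or_lt with h | h
  · rw [← h]; exact htnn
  · have := (mul_le_mul_iff_left₀ h).mp (by nlinarith : s * s ≤ t * s)
    linarith
end antitone

section more
variable {A : Matrix (Fin d) (Fin d) ℝ}

lemma posdef_add_smul (hA : A.PosDef) {t : ℝ} (ht : 0 ≤ t) :
    (A + t • (1 : Matrix (Fin d) (Fin d) ℝ)).PosDef := by
  refine Matrix.PosDef.of_dotProduct_mulVec_pos ?_ ?_
  · exact hA.1.add (by simp [Matrix.IsHermitian])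
  · intro x hx
    have h1 := hA.dotProduct_mulVec_pos hx
    rw [star_trivial] at h1 ⊢
    have h2 : 0 ≤ x ⬝ᵥ x := by
      apply Finset.sum_nonneg; intro i _; exact mul_self_nonneg _
    rw [add_mulVec, dotProduct_add, smul_mulVec, one_mulVec, dotProduct_smul]
    have : 0 ≤ t * (x ⬝ᵥ x) := mul_nonneg ht h2
    simpa [smul_eq_mul] using by linarith

lemma norm_conj (h : A.IsHermitian) (x : Fin d → ℝ) :
    ∑ i, ((star (h.eigenvectorUnitary : Matrix (Fin d) (Fin d) ℝ) *ᵥ x) i)^2 = x ⬝ᵥ x := by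
  have := pair_conj (h.eigenvectorUnitary : Matrix (Fin d) (Fin d) ℝ) (fun _ => 1) x
  have hU : (h.eigenvectorUnitary : Matrix (Fin d) (Fin d) ℝ)
      * star (h.eigenvectorUnitary : Matrix (Fin d) (Fin d) ℝ) = 1 :=
    Unitary.coe_mul_star_self _
  simpa [diagonal_one, hU] using this.symm

lemma res_pair (hA : A.PosDef) {t : ℝ} (ht : 0 ≤ t) (x : Fin d → ℝ) :
    x ⬝ᵥ ((A + t • (1 : Matrix (Fin d) (Fin d) ℝ))⁻¹ *ᵥ x)
      = ∑ i, (hA.1.eigenvalues i + t)⁻¹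
          * ((star (hA.1.eigenvectorUnitary : Matrix (Fin d) (Fin d) ℝ) *ᵥ x) i)^2 := by
  rw [conj_add_smul hA.1 t, inv_conj hA.1 _
    (fun i => by have := hA.eigenvalues_pos i; positivity), pair_conj]

end more
end StmtAux
end Aux

section MainPairing
open Set MeasureTheory StmtAux

/-- Key pairing identity: the quadratic form of `mlog` as an improper integral. -/
lemma mlog_pair_integral {d : ℕ} {A : Matrix (Fin d) (Fin d) ℝ} (hA : A.PosDef)
    (x : Fin d → ℝ) :
    IntegrableOn (fun t => ∑ i, ((1+t)⁻¹ - (hA.1.eigenvalues i + t)⁻¹)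
        * ((star (hA.1.eigenvectorUnitary : Matrix (Fin d) (Fin d) ℝ) *ᵥ x) i)^2) (Ioi 0) ∧
    (∫ t in Ioi (0:ℝ), ∑ i, ((1+t)⁻¹ - (hA.1.eigenvalues i + t)⁻¹)
        * ((star (hA.1.eigenvectorUnitary : Matrix (Fin d) (Fin d) ℝ) *ᵥ x) i)^2)
      = x ⬝ᵥ (mlog A *ᵥ x) := by
  set c := star (hA.1.eigenvectorUnitary : Matrix (Fin d) (Fin d) ℝ) *ᵥ x with hc
  have hint : ∀ i : Fin d, IntegrableOn
      (fun t => ((1+t)⁻¹ - (hA.1.eigenvalues i + t)⁻¹) * (c i)^2) (Ioi 0) :=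
    fun i => ((scalar_int _ (hA.eigenvalues_pos i)).1).mul_const _
  constructor
  · exact MeasureTheory.integrable_finset_sum _ (fun i _ => hint i)
  · rw [MeasureTheory.integral_finset_sum _ (fun i _ => hint i)]
    have : ∀ i : Fin d,
        (∫ t in Ioi (0:ℝ), ((1+t)⁻¹ - (hA.1.eigenvalues i + t)⁻¹) * (c i)^2)
          = Real.log (hA.1.eigenvalues i) * (c i)^2 := by
      intro i
      rw [MeasureTheory.integral_mul_const, (scalar_int _ (hA.eigenvalues_pos i)).2]
    rw [Finset.sum_congr rfl (fun i _ => this i)]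
    rw [mlog, mlog_eq hA.1, pair_conj]

end MainPairing

theorem stmt_7 {d : ℕ} (A B : Matrix (Fin d) (Fin d) ℝ)
    (hA : A.PosDef) (hB : B.PosDef) (hAB : (B - A).PosSemidef) :
    (mlog B - mlog A).PosSemidef := by
  open Set MeasureTheory StmtAux in
  refine Matrix.PosSemidef.of_dotProduct_mulVec_nonneg ?_ ?_
  · apply Matrix.IsHermitian.sub
    · rw [mlog, mlog_eq hB.1, star_eq_conjTranspose]
      exact isHermitian_mul_mul_conjTranspose _ (isHermitian_diagonal _)
    · rw [mlog, mlog_eq hA.1, star_eq_conjTranspose]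
      exact isHermitian_mul_mul_conjTranspose _ (isHermitian_diagonal _)
  · intro x
    rw [star_trivial, sub_mulVec, dotProduct_sub, sub_nonneg]
    set cA := star (hA.1.eigenvectorUnitary : Matrix (Fin d) (Fin d) ℝ) *ᵥ x with hcA
    set cB := star (hB.1.eigenvectorUnitary : Matrix (Fin d) (Fin d) ℝ) *ᵥ x with hcB
    obtain ⟨hintA, hvalA⟩ := mlog_pair_integral hA x
    obtain ⟨hintB, hvalB⟩ := mlog_pair_integral hB x
    rw [← hvalA, ← hvalB]
    apply MeasureTheory.setIntegral_mono_on hintA hintB measurableSet_Ioi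
    intro t ht
    have ht' : (0:ℝ) ≤ t := (le_of_lt ht)
    -- rewrite both sides using resolvent pairing
    have hsplit : ∀ (M : Matrix (Fin d) (Fin d) ℝ) (hM : M.PosDef),
        ∑ i, ((1+t)⁻¹ - (hM.1.eigenvalues i + t)⁻¹)
            * ((star (hM.1.eigenvectorUnitary : Matrix (Fin d) (Fin d) ℝ) *ᵥ x) i)^2
          = (1+t)⁻¹ * (x ⬝ᵥ x)
            - x ⬝ᵥ ((M + t • (1 : Matrix (Fin d) (Fin d) ℝ))⁻¹ *ᵥ x) := by
      intro M hM
      rw [res_pair hM ht' x]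
      have hterm : ∀ i : Fin d, ((1+t)⁻¹ - (hM.1.eigenvalues i + t)⁻¹)
            * ((star (hM.1.eigenvectorUnitary : Matrix (Fin d) (Fin d) ℝ) *ᵥ x) i)^2
          = (1+t)⁻¹ * ((star (hM.1.eigenvectorUnitary : Matrix (Fin d) (Fin d) ℝ) *ᵥ x) i)^2
            - (hM.1.eigenvalues i + t)⁻¹
              * ((star (hM.1.eigenvectorUnitary : Matrix (Fin d) (Fin d) ℝ) *ᵥ x) i)^2 := by
        intro i; ring
      rw [Finset.sum_congr rfl (fun i _ => hterm i), Finset.sum_sub_distrib,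
        ← Finset.mul_sum, norm_conj hM.1 x]
    rw [hsplit A hA, hsplit B hB]
    have h1 := inv_pair_antitone (posdef_add_smul hA ht') (posdef_add_smul hB ht')
      (by rwa [add_sub_add_right_eq_sub]) x
    linarith
end

section
/- For d×d symmetric positive definite matrices X and Y, the Burg (log-determinant) divergence d_burg(X,Y) = trace(XY^{-1}) − log det(XY^{-1}) − d is nonnegative, and equals zero if and only if X = Y. -/
open Matrix

lemma posDef_conj' {n : Type*} [Fintype n] [DecidableEq n] {A : Matrix n n ℝ} (hA : A.PosDef)
    {B : Matrix n n ℝ} (hB : IsUnit B) : (Bᴴ * A * B).PosDef := by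
  have hinj := Matrix.mulVec_injective_iff_isUnit.mpr hB
  exact hA.conjTranspose_mul_mul_same hinj

lemma trace_eq_sum_eig' {n : Type*} [Fintype n] [DecidableEq n] {A : Matrix n n ℝ}
    (hA : A.IsHermitian) : A.trace = ∑ i, hA.eigenvalues i := by
  conv_lhs => rw [hA.spectral_theorem, Unitary.conjStarAlgAut_apply]
  rw [Matrix.trace_mul_cycle]
  have : (star (hA.eigenvectorUnitary : Matrix n n ℝ)) * (hA.eigenvectorUnitary : Matrix n n ℝ) = 1 := by
    exact (Matrix.mem_unitaryGroup_iff').mp hA.eigenvectorUnitary.2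
  rw [this, Matrix.one_mul, Matrix.trace_diagonal]
  simp

open scoped MatrixOrder

theorem stmt_13 {d : ℕ} (X Y : Matrix (Fin d) (Fin d) ℝ)
    (hX : X.PosDef) (hY : Y.PosDef) :
    0 ≤ Matrix.trace (X * Y⁻¹) - Real.log ((X * Y⁻¹).det) - d ∧
    (Matrix.trace (X * Y⁻¹) - Real.log ((X * Y⁻¹).det) - d = 0 ↔ X = Y) := by
  classical
  set B := CFC.sqrt Y with hBdef
  have hBH : B.IsHermitian := (CFC.sqrt_nonneg Y).posSemidef.1
  have hBB : B * B = Y := CFC.sqrt_mul_sqrt_self Y hY.posSemidef.nonneg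
  have hYdet : Y.det ≠ 0 := hY.det_pos.ne'
  have hBdet : B.det ≠ 0 := by
    intro h; apply hYdet; rw [← hBB, Matrix.det_mul, h, zero_mul]
  have hBunit : IsUnit B := (Matrix.isUnit_iff_isUnit_det _).2 hBdet.isUnit
  have hBinv : B * B⁻¹ = 1 := Matrix.mul_nonsing_inv _ hBdet.isUnit
  have hBinv' : B⁻¹ * B = 1 := Matrix.nonsing_inv_mul _ hBdet.isUnit
  have hBiH : (B⁻¹)ᴴ = B⁻¹ := by
    rw [Matrix.conjTranspose_nonsing_inv, hBH.eq]
  have hBiunit : IsUnit (B⁻¹ : Matrix (Fin d) (Fin d) ℝ) :=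
    (Matrix.isUnit_nonsing_inv_iff).2 hBunit
  set M := B⁻¹ * X * B⁻¹ with hMdef
  have hMpos : M.PosDef := by
    have := posDef_conj' hX hBiunit
    rwa [hBiH] at this
  have hYinv : Y⁻¹ = B⁻¹ * B⁻¹ := by rw [← hBB, Matrix.mul_inv_rev]
  -- trace equality
  have htr : Matrix.trace (X * Y⁻¹) = Matrix.trace M := by
    rw [hYinv, hMdef, ← Matrix.mul_assoc, Matrix.trace_mul_cycle]
  -- det equality
  have hdet : (X * Y⁻¹).det = M.det := by
    rw [hYinv, hMdef]
    rw [Matrix.det_mul, Matrix.det_mul, Matrix.det_mul, Matrix.det_mul]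
    ring
  set μ := hMpos.1.eigenvalues with hμ
  have hμpos : ∀ i, 0 < μ i := fun i => hMpos.eigenvalues_pos i
  have htrM : Matrix.trace M = ∑ i, μ i := trace_eq_sum_eig' hMpos.1
  have hdetM : M.det = ∏ i, μ i := by
    have := hMpos.1.det_eq_prod_eigenvalues
    simpa using this
  have hlog : Real.log M.det = ∑ i, Real.log (μ i) := by
    rw [hdetM, Real.log_prod (fun i _ => (hμpos i).ne')]
  have hE : Matrix.trace (X * Y⁻¹) - Real.log ((X * Y⁻¹).det) - d
      = ∑ i, (μ i - Real.log (μ i) - 1) := by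
    rw [htr, hdet, htrM, hlog]
    rw [Finset.sum_sub_distrib, Finset.sum_sub_distrib, Finset.sum_const, Finset.card_univ,
      Fintype.card_fin, nsmul_eq_mul, mul_one]
  have hterm : ∀ i ∈ Finset.univ, 0 ≤ μ i - Real.log (μ i) - 1 := by
    intro i _
    have := Real.log_le_sub_one_of_pos (hμpos i)
    linarith
  constructor
  · rw [hE]; exact Finset.sum_nonneg hterm
  constructor
  · intro h0
    rw [hE] at h0
    have hall := (Finset.sum_eq_zero_iff_of_nonneg hterm).1 h0
    have hμ1 : ∀ i, μ i = 1 := by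
      intro i
      by_contra hne
      have := Real.log_lt_sub_one_of_pos (hμpos i) hne
      have := hall i (Finset.mem_univ i)
      linarith
    have hM1 : M = 1 := by
      have := hMpos.1.spectral_theorem
      rw [this, Unitary.conjStarAlgAut_apply]
      have hfun : (RCLike.ofReal ∘ μ : Fin d → ℝ) = fun _ => (1 : ℝ) :=
        funext fun i => by simp [hμ1 i]
      have hdiag : Matrix.diagonal (RCLike.ofReal ∘ μ) = (1 : Matrix (Fin d) (Fin d) ℝ) := by
        rw [hfun]; simp
      rw [hdiag, Matrix.mul_one]
      exact (Matrix.mem_unitaryGroup_iff).mp hMpos.1.eigenvectorUnitary.2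
    -- X = B * M * B = B * B = Y
    have : B * M * B = X := by
      rw [hMdef, ← Matrix.mul_assoc, ← Matrix.mul_assoc, hBinv, Matrix.one_mul,
        Matrix.mul_assoc, hBinv', Matrix.mul_one]
    rw [hM1, Matrix.mul_one, hBB] at this
    exact this.symm
  · intro h
    subst h
    have hXinv : X * X⁻¹ = 1 := Matrix.mul_nonsing_inv _ hX.det_pos.ne'.isUnit
    rw [hXinv]
    simp
end

section
/- Let φ(α) = ½‖Log(Σᵢ αᵢ S Bᵢ S)‖_F² + λ Σᵢ αᵢ with S, B₁,…,Bₙ symmetric positive definite and λ ≥ 0 and α in the open set where M(α) = Σᵢ αᵢ Bᵢ is positive definite. Then the partial derivative ∂φ/∂α_p = trace(Log(S M(α) S)(S M(α) S)^{-1} S B_p S) + λ. -/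
open Matrix

open Polynomial
open scoped RealInnerProductSpace

variable {d : ℕ}

attribute [local instance] Matrix.linftyOpNormedRing Matrix.linftyOpNormedAlgebra


attribute [local instance] Matrix.linftyOpNormedRing Matrix.linftyOpNormedAlgebra

lemma contOnSpec (f : ℝ → ℝ) (Y : Matrix (Fin d) (Fin d) ℝ) :
    ContinuousOn f (spectrum ℝ Y) := by
  have hfin : (spectrum ℝ Y).Finite := Y.finite_real_spectrum
  rw [continuousOn_iff_continuous_restrict]
  have : Finite (spectrum ℝ Y) := hfin
  have : DiscreteTopology (spectrum ℝ Y) := by infer_instance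
  exact continuous_of_discreteTopology

lemma hasDerivAt_trace {F : ℝ → Matrix (Fin d) (Fin d) ℝ} {F' : Matrix (Fin d) (Fin d) ℝ} {t : ℝ}
    (h : HasDerivAt F F' t) :
    HasDerivAt (fun s => Matrix.trace (F s)) (Matrix.trace F') t :=
  ((LinearMap.toContinuousLinearMap (Matrix.traceLinearMap (Fin d) ℝ ℝ)).hasFDerivAt
    (x := F t)).comp_hasDerivAt t h

lemma hasDerivAt_X (A C : Matrix (Fin d) (Fin d) ℝ) (t : ℝ) :
    HasDerivAt (fun s : ℝ => A + s • C) C t := by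
  exact ((hasDerivAt_const t A).add ((hasDerivAt_id t).smul_const C)).congr_deriv (by simp)

lemma pow_hasDerivAt (A C : Matrix (Fin d) (Fin d) ℝ) (t : ℝ) (k : ℕ) :
    HasDerivAt (fun s : ℝ => (A + s • C) ^ k)
      (∑ i ∈ Finset.range k, (A + t • C) ^ i * C * (A + t • C) ^ (k - 1 - i)) t := by
  set X := fun s : ℝ => A + s • C with hXdef
  induction k with
  | zero =>
    simp only [pow_zero, Finset.range_zero, Finset.sum_empty]
    exact hasDerivAt_const t (1 : Matrix (Fin d) (Fin d) ℝ)
  | succ k ih =>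
    have h := (hasDerivAt_X A C t).mul ih
    have hfun : (fun s : ℝ => X s * X s ^ k) = fun s : ℝ => X s ^ (k + 1) := by
      funext s; rw [← pow_succ']
    rw [show ((fun s : ℝ => A + s • C) * fun s : ℝ => (A + s • C) ^ k) = fun s : ℝ => X s ^ (k + 1) from hfun] at h
    have key : ∑ i ∈ Finset.range (k + 1), X t ^ i * C * X t ^ (k + 1 - 1 - i)
        = C * X t ^ k + X t * ∑ i ∈ Finset.range k, X t ^ i * C * X t ^ (k - 1 - i) := by
      simp only [Nat.add_sub_cancel]
      rw [Finset.sum_range_succ' (fun i => X t ^ i * C * X t ^ (k - i)) k, Finset.mul_sum,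
        add_comm]
      congr 1
      · simp
      · refine Finset.sum_congr rfl fun i hi => ?_
        rw [show k - (i + 1) = k - 1 - i from by omega, ← mul_assoc, ← mul_assoc, ← pow_succ']
    rw [key]
    exact h

lemma trace_pow_hasDerivAt (A C : Matrix (Fin d) (Fin d) ℝ) (t : ℝ) (k : ℕ) :
    HasDerivAt (fun s : ℝ => Matrix.trace ((A + s • C) ^ k))
      ((k : ℝ) * Matrix.trace ((A + t • C) ^ (k - 1) * C)) t := by
  have h := hasDerivAt_trace (pow_hasDerivAt A C t k)
  convert h using 1
  rw [Matrix.trace_sum]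
  have : ∀ i ∈ Finset.range k,
      Matrix.trace ((A + t • C) ^ i * C * (A + t • C) ^ (k - 1 - i))
        = Matrix.trace ((A + t • C) ^ (k - 1) * C) := by
    intro i hi
    rw [Finset.mem_range] at hi
    rw [Matrix.trace_mul_cycle, ← pow_add, show k - 1 - i + i = k - 1 from by omega]
  rw [Finset.sum_congr rfl this, Finset.sum_const, Finset.card_range, nsmul_eq_mul]

lemma trace_aeval_hasDerivAt (A C : Matrix (Fin d) (Fin d) ℝ) (t : ℝ) (q : ℝ[X]) :
    HasDerivAt (fun s : ℝ => Matrix.trace (Polynomial.aeval (A + s • C) q))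
      (Matrix.trace (Polynomial.aeval (A + t • C) q.derivative * C)) t := by
  induction q using Polynomial.induction_on' with
  | add p q hp hq =>
    simp only [map_add, Matrix.trace_add, add_mul]
    exact hp.add hq
  | monomial k a =>
    have h := (trace_pow_hasDerivAt A C t k).const_mul a
    simp only [Polynomial.aeval_monomial, Polynomial.derivative_monomial]
    convert h using 2
    · rfl
    · rfl
    · rw [Algebra.algebraMap_eq_smul_one, smul_mul_assoc, one_mul, Matrix.trace_smul,
        smul_eq_mul]
    · rw [Algebra.algebraMap_eq_smul_one, smul_mul_assoc, smul_mul_assoc, one_mul,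
        Matrix.trace_smul, smul_eq_mul]
      push_cast
      ring

open scoped RealInnerProductSpace

lemma exists_unit_eigenvector {Y : Matrix (Fin d) (Fin d) ℝ} (hY : Y.IsHermitian) (i : Fin d) :
    ∃ v : Fin d → ℝ, v ⬝ᵥ v = 1 ∧ Y *ᵥ v = hY.eigenvalues i • v := by
  refine ⟨⇑(hY.eigenvectorBasis i), ?_, hY.mulVec_eigenvectorBasis i⟩
  have h1 : ‖hY.eigenvectorBasis i‖ = 1 := hY.eigenvectorBasis.orthonormal.1 i
  have h2 : ⟪hY.eigenvectorBasis i, hY.eigenvectorBasis i⟫ = 1 := by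
    rw [real_inner_self_eq_norm_sq, h1]; norm_num
  rw [← h2, PiLp.inner_apply]
  simp [dotProduct, RCLike.inner_apply, mul_comm, sq]

lemma smul_one_conj (U : Matrix (Fin d) (Fin d) ℝ) (hU : U * Uᴴ = 1) (c : ℝ) :
    U * (c • (1 : Matrix (Fin d) (Fin d) ℝ)) * Uᴴ = c • 1 := by
  rw [Matrix.mul_smul, Matrix.smul_mul, mul_one, hU]

lemma sub_smul_one_eq_conj {Y : Matrix (Fin d) (Fin d) ℝ} (hY : Y.IsHermitian) (c : ℝ) :
    Y - c • 1 = (hY.eigenvectorUnitary : Matrix (Fin d) (Fin d) ℝ) *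
      Matrix.diagonal (fun i => hY.eigenvalues i - c) *
      (hY.eigenvectorUnitary : Matrix (Fin d) (Fin d) ℝ)ᴴ := by
  have hU : (hY.eigenvectorUnitary : Matrix (Fin d) (Fin d) ℝ) *
      (hY.eigenvectorUnitary : Matrix (Fin d) (Fin d) ℝ)ᴴ = 1 := by
    simpa [Matrix.star_eq_conjTranspose] using
      Unitary.mul_star_self_of_mem (hY.eigenvectorUnitary).2
  have hdiag : Matrix.diagonal (fun i => hY.eigenvalues i - c)
      = Matrix.diagonal hY.eigenvalues - c • 1 := by
    ext i j
    by_cases h : i = j <;>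
      simp [Matrix.diagonal_apply, h, Matrix.one_apply, Matrix.sub_apply]
  rw [hdiag, Matrix.mul_sub, Matrix.sub_mul, smul_one_conj _ hU]
  congr 1
  conv_lhs => rw [hY.spectral_theorem]
  simp [RCLike.ofReal_real_eq_id, Matrix.star_eq_conjTranspose]

lemma quad_lower {Y : Matrix (Fin d) (Fin d) ℝ} (hY : Y.IsHermitian) {c : ℝ}
    (hc : ∀ i, c ≤ hY.eigenvalues i) (v : Fin d → ℝ) :
    c * (v ⬝ᵥ v) ≤ v ⬝ᵥ (Y *ᵥ v) := by
  have hpsd : (Y - c • 1).PosSemidef := by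
    rw [sub_smul_one_eq_conj hY c]
    exact (Matrix.posSemidef_diagonal_iff.mpr fun i => sub_nonneg.mpr (hc i)).mul_mul_conjTranspose_same _
  have h := (Matrix.posSemidef_iff_dotProduct_mulVec.mp hpsd).2 v
  simp only [star_trivial, Matrix.sub_mulVec, Matrix.smul_mulVec, Matrix.one_mulVec,
    dotProduct_sub, dotProduct_smul, smul_eq_mul] at h
  linarith

lemma quad_upper {Y : Matrix (Fin d) (Fin d) ℝ} (hY : Y.IsHermitian) {c : ℝ}
    (hc : ∀ i, hY.eigenvalues i ≤ c) (v : Fin d → ℝ) :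
    v ⬝ᵥ (Y *ᵥ v) ≤ c * (v ⬝ᵥ v) := by
  have hpsd : (c • 1 - Y).PosSemidef := by
    have : c • (1 : Matrix (Fin d) (Fin d) ℝ) - Y = -(Y - c • 1) := by
      rw [neg_sub]
    rw [this, sub_smul_one_eq_conj hY c]
    have : -((hY.eigenvectorUnitary : Matrix (Fin d) (Fin d) ℝ) *
        Matrix.diagonal (fun i => hY.eigenvalues i - c) *
        (hY.eigenvectorUnitary : Matrix (Fin d) (Fin d) ℝ)ᴴ)
        = (hY.eigenvectorUnitary : Matrix (Fin d) (Fin d) ℝ) *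
        Matrix.diagonal (fun i => c - hY.eigenvalues i) *
        (hY.eigenvectorUnitary : Matrix (Fin d) (Fin d) ℝ)ᴴ := by
      rw [← Matrix.neg_mul, ← Matrix.mul_neg, Matrix.diagonal_neg]
      congr 2
      funext i
      simp
    rw [this]
    exact (Matrix.posSemidef_diagonal_iff.mpr fun i => sub_nonneg.mpr (hc i)).mul_mul_conjTranspose_same _
  have h := (Matrix.posSemidef_iff_dotProduct_mulVec.mp hpsd).2 v
  simp only [star_trivial, Matrix.sub_mulVec, Matrix.smul_mulVec, Matrix.one_mulVec,
    dotProduct_sub, dotProduct_smul, smul_eq_mul] at h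
  linarith

lemma trace_diagonal_mul' (v : Fin d → ℝ) (M : Matrix (Fin d) (Fin d) ℝ) :
    Matrix.trace (Matrix.diagonal v * M) = ∑ k, v k * M k k := by
  simp [Matrix.trace, Matrix.diag, Matrix.diagonal_mul]

lemma trace_cfc_mul_abs_le {Y : Matrix (Fin d) (Fin d) ℝ} (hY : Y.IsHermitian) {a b ε : ℝ}
    (hspec : ∀ i, hY.eigenvalues i ∈ Set.Icc a b) (g : ℝ → ℝ)
    (hg : ∀ x ∈ Set.Icc a b, |g x| ≤ ε) (Cm : Matrix (Fin d) (Fin d) ℝ) :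
    |Matrix.trace (cfc g Y * Cm)| ≤ (d : ℝ) * ε * ∑ i, ∑ j, |Cm i j| := by
  set U : Matrix (Fin d) (Fin d) ℝ := (hY.eigenvectorUnitary : Matrix (Fin d) (Fin d) ℝ) with hUdef
  have hcfc : cfc g Y = U * Matrix.diagonal (g ∘ hY.eigenvalues) * Uᴴ := by
    rw [hY.cfc_eq, Matrix.IsHermitian.cfc]
    simp [RCLike.ofReal_real_eq_id, Matrix.star_eq_conjTranspose]
    rfl
  have hUnit : Uᴴ * U = 1 := by
    simpa [Matrix.star_eq_conjTranspose] using
      Unitary.star_mul_self_of_mem (hY.eigenvectorUnitary).2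
  have hUentry : ∀ i k, |U i k| ≤ 1 := by
    intro i k
    have hcol : ∑ j, U j k * U j k = 1 := by
      have := congrFun (congrFun hUnit k) k
      simpa [Matrix.mul_apply, Matrix.conjTranspose_apply, Matrix.one_apply] using this
    rw [abs_le_one_iff_mul_self_le_one, ← hcol]
    exact Finset.single_le_sum (fun j _ => mul_self_nonneg (U j k)) (Finset.mem_univ i)
  set K := ∑ i, ∑ j, |Cm i j| with hK
  have hK0 : 0 ≤ K :=
    Finset.sum_nonneg fun i _ => Finset.sum_nonneg fun j _ => abs_nonneg _
  set M := Uᴴ * Cm * U with hM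
  have htr : Matrix.trace (cfc g Y * Cm) = ∑ k, (g ∘ hY.eigenvalues) k * M k k := by
    rw [hcfc, mul_assoc, mul_assoc, Matrix.trace_mul_comm, mul_assoc, mul_assoc,
      trace_diagonal_mul']
    simp [hM, mul_assoc]
  have hMkk : ∀ k, |M k k| ≤ K := by
    intro k
    have h1 : M k k = ∑ j, (∑ i, U i k * Cm i j) * U j k := by
      simp [hM, Matrix.mul_apply, Matrix.conjTranspose_apply, Finset.sum_mul]
    rw [h1]
    calc |∑ j, (∑ i, U i k * Cm i j) * U j k| ≤ ∑ j, |(∑ i, U i k * Cm i j) * U j k| :=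
          Finset.abs_sum_le_sum_abs _ _
      _ ≤ ∑ j, ∑ i, |Cm i j| := by
          refine Finset.sum_le_sum fun j _ => ?_
          rw [abs_mul]
          calc |∑ i, U i k * Cm i j| * |U j k| ≤ |∑ i, U i k * Cm i j| * 1 := by
                have := hUentry j k
                exact mul_le_mul_of_nonneg_left this (abs_nonneg _)
            _ ≤ ∑ i, |Cm i j| := by
                rw [mul_one]
                refine le_trans (Finset.abs_sum_le_sum_abs _ _) (Finset.sum_le_sum fun i _ => ?_)
                rw [abs_mul]
                calc |U i k| * |Cm i j| ≤ 1 * |Cm i j| :=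
                      mul_le_mul_of_nonneg_right (hUentry i k) (abs_nonneg _)
                  _ = |Cm i j| := one_mul _
      _ = K := Finset.sum_comm
  rw [htr]
  calc |∑ k, (g ∘ hY.eigenvalues) k * M k k| ≤ ∑ k, |(g ∘ hY.eigenvalues) k * M k k| :=
        Finset.abs_sum_le_sum_abs _ _
    _ ≤ ∑ _k : Fin d, ε * K := by
        refine Finset.sum_le_sum fun k _ => ?_
        rw [abs_mul]
        have h1 := hg _ (hspec k)
        exact mul_le_mul h1 (hMkk k) (abs_nonneg _) (le_trans (abs_nonneg _) h1)
    _ = (d : ℝ) * ε * K := by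
        rw [Finset.sum_const, Finset.card_univ, Fintype.card_fin, nsmul_eq_mul, mul_assoc]

lemma dotProduct_entry_le {v : Fin d → ℝ} (hv : v ⬝ᵥ v = 1) (j : Fin d) : |v j| ≤ 1 := by
  rw [abs_le_one_iff_mul_self_le_one, ← hv]
  exact Finset.single_le_sum (fun i _ => mul_self_nonneg (v i)) (Finset.mem_univ j)

lemma abs_quad_le (C : Matrix (Fin d) (Fin d) ℝ) {v : Fin d → ℝ} (hv : ∀ j, |v j| ≤ 1) :
    |v ⬝ᵥ (C *ᵥ v)| ≤ ∑ i, ∑ j, |C i j| := by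
  have h1 : v ⬝ᵥ (C *ᵥ v) = ∑ i, v i * ∑ j, C i j * v j := rfl
  rw [h1]
  calc |∑ i, v i * ∑ j, C i j * v j| ≤ ∑ i, |v i * ∑ j, C i j * v j| :=
        Finset.abs_sum_le_sum_abs _ _
    _ ≤ ∑ i, ∑ j, |C i j| := by
        refine Finset.sum_le_sum fun i _ => ?_
        rw [abs_mul]
        calc |v i| * |∑ j, C i j * v j| ≤ 1 * |∑ j, C i j * v j| :=
              mul_le_mul_of_nonneg_right (hv i) (abs_nonneg _)
          _ = |∑ j, C i j * v j| := one_mul _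
          _ ≤ ∑ j, |C i j * v j| := Finset.abs_sum_le_sum_abs _ _
          _ ≤ ∑ j, |C i j| := by
              refine Finset.sum_le_sum fun j _ => ?_
              rw [abs_mul]
              calc |C i j| * |v j| ≤ |C i j| * 1 :=
                    mul_le_mul_of_nonneg_left (hv j) (abs_nonneg _)
                _ = |C i j| := mul_one _

lemma spec_window (A C : Matrix (Fin d) (Fin d) ℝ) (t₀ : ℝ) (hX : (A + t₀ • C).PosDef) :
    ∃ δ > 0, ∃ a b : ℝ, 0 < a ∧ a ≤ b ∧
      ∀ t ∈ Set.Ioo (t₀ - δ) (t₀ + δ), ∀ (H : (A + t • C).IsHermitian), ∀ i,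
        H.eigenvalues i ∈ Set.Icc a b := by
  set X₀ := A + t₀ • C with hX₀def
  have hFne : (insert (1:ℝ) (Finset.univ.image hX.1.eigenvalues)).Nonempty :=
    ⟨1, Finset.mem_insert_self _ _⟩
  set F : Finset ℝ := insert 1 (Finset.univ.image hX.1.eigenvalues) with hF
  obtain ⟨a0, ha0mem, ha0min⟩ : ∃ a0 ∈ F, ∀ x ∈ F, a0 ≤ x :=
    ⟨F.min' hFne, F.min'_mem hFne, fun x hx => F.min'_le x hx⟩
  obtain ⟨b0, hb0mem, hb0max⟩ : ∃ b0 ∈ F, ∀ x ∈ F, x ≤ b0 :=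
    ⟨F.max' hFne, F.max'_mem hFne, fun x hx => F.le_max' x hx⟩
  have ha0pos : 0 < a0 := by
    rcases Finset.mem_insert.mp ha0mem with h | h
    · rw [h]; norm_num
    · obtain ⟨i, _, hi⟩ := Finset.mem_image.mp h
      rw [← hi]
      exact hX.eigenvalues_pos i
  have ha0le : ∀ i, a0 ≤ hX.1.eigenvalues i := fun i =>
    ha0min _ (Finset.mem_insert_of_mem (Finset.mem_image_of_mem _ (Finset.mem_univ i)))
  have hb0ge : ∀ i, hX.1.eigenvalues i ≤ b0 := fun i =>
    hb0max _ (Finset.mem_insert_of_mem (Finset.mem_image_of_mem _ (Finset.mem_univ i)))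
  have ha0b0 : a0 ≤ b0 := ha0min _ hb0mem
  set Kc := ∑ i, ∑ j, |C i j| with hKc
  have hKc0 : 0 ≤ Kc :=
    Finset.sum_nonneg fun i _ => Finset.sum_nonneg fun j _ => abs_nonneg _
  have hden : (0:ℝ) < 2 * (Kc + 1) := by linarith
  refine ⟨a0 / (2 * (Kc + 1)), div_pos ha0pos hden, a0 / 2, b0 + a0 / 2, half_pos ha0pos,
    by linarith, fun t ht H i => ?_⟩
  obtain ⟨v, hv1, hv2⟩ := exists_unit_eigenvector H i
  have hvent := fun j => dotProduct_entry_le hv1 j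
  have hμ : v ⬝ᵥ ((A + t • C) *ᵥ v) = H.eigenvalues i := by
    rw [hv2, dotProduct_smul, smul_eq_mul, hv1, mul_one]
  have hdecomp : A + t • C = X₀ + (t - t₀) • C := by
    rw [hX₀def, sub_smul]
    abel
  have hsplit : v ⬝ᵥ ((A + t • C) *ᵥ v)
      = v ⬝ᵥ (X₀ *ᵥ v) + (t - t₀) * (v ⬝ᵥ (C *ᵥ v)) := by
    rw [hdecomp, Matrix.add_mulVec, dotProduct_add, Matrix.smul_mulVec, dotProduct_smul,
      smul_eq_mul]
  have hq0l : a0 ≤ v ⬝ᵥ (X₀ *ᵥ v) := by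
    have := quad_lower hX.1 ha0le v
    rwa [hv1, mul_one] at this
  have hq0u : v ⬝ᵥ (X₀ *ᵥ v) ≤ b0 := by
    have := quad_upper hX.1 hb0ge v
    rwa [hv1, mul_one] at this
  have hqc := abs_quad_le C hvent
  have htδ : |t - t₀| ≤ a0 / (2 * (Kc + 1)) := by
    rw [Set.mem_Ioo] at ht
    rw [abs_le]
    constructor <;> linarith [ht.1, ht.2]
  have hpert : |(t - t₀) * (v ⬝ᵥ (C *ᵥ v))| ≤ a0 / 2 := by
    rw [abs_mul]
    calc |t - t₀| * |v ⬝ᵥ (C *ᵥ v)| ≤ (a0 / (2 * (Kc + 1))) * Kc :=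
          mul_le_mul htδ hqc (abs_nonneg _) (le_of_lt (div_pos ha0pos hden))
      _ ≤ a0 / 2 := by
          rw [div_mul_eq_mul_div, div_le_div_iff₀ hden (by norm_num : (0:ℝ) < 2)]
          nlinarith
  rw [abs_le] at hpert
  rw [← hμ, hsplit]
  constructor <;> linarith


noncomputable def pAnti (q : ℝ[X]) : ℝ[X] :=
  ∑ k ∈ q.support, Polynomial.C (q.coeff k / (k + 1)) * Polynomial.X ^ (k + 1)

lemma derivative_pAnti (q : ℝ[X]) : (pAnti q).derivative = q := by
  rw [pAnti, map_sum]
  conv_rhs => rw [q.as_sum_support_C_mul_X_pow]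
  refine Finset.sum_congr rfl fun k _ => ?_
  rw [derivative_C_mul, derivative_X_pow, Nat.add_sub_cancel, ← mul_assoc, ← Polynomial.C_mul]
  congr 2
  push_cast
  field_simp


lemma hermitian_family {A C : Matrix (Fin d) (Fin d) ℝ} (hA : A.IsHermitian)
    (hC : C.IsHermitian) (t : ℝ) : (A + t • C).IsHermitian := by
  refine hA.add ?_
  unfold Matrix.IsHermitian
  rw [Matrix.conjTranspose_smul, hC.eq]
  simp

lemma main_deriv (A C : Matrix (Fin d) (Fin d) ℝ) (hAh : A.IsHermitian) (hCh : C.IsHermitian)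
    (t₀ : ℝ) (hX : (A + t₀ • C).PosDef)
    (h h' : ℝ → ℝ) (hderiv : ∀ x ∈ Set.Ioi (0:ℝ), HasDerivAt h (h' x) x)
    (hcont : ContinuousOn h' (Set.Ioi 0)) :
    HasDerivAt (fun t => Matrix.trace (cfc h (A + t • C)))
      (Matrix.trace (cfc h' (A + t₀ • C) * C)) t₀ := by
  obtain ⟨δ, hδ, a, b, ha, hab, hwin⟩ := spec_window A C t₀ hX
  have hHt : ∀ t : ℝ, (A + t • C).IsHermitian := hermitian_family hAh hCh
  set s := Set.Ioo (t₀ - δ) (t₀ + δ) with hs_def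
  have hs : IsOpen s := isOpen_Ioo
  have ht₀s : t₀ ∈ s := by constructor <;> linarith
  have hIcc_pos : Set.Icc a b ⊆ Set.Ioi 0 := fun x hx => lt_of_lt_of_le ha hx.1
  have hcont' : ContinuousOn h' (Set.Icc a b) := hcont.mono hIcc_pos
  have hchoice : ∀ m : ℕ, ∃ q : ℝ[X], ∀ x ∈ Set.Icc a b,
      |q.eval x - h' x| < 1 / (m + 1) := fun m =>
    exists_polynomial_near_of_continuousOn a b h' hcont' _ (by positivity)
  choose q hq using hchoice
  set P : ℕ → ℝ[X] := fun m => pAnti (q m) + Polynomial.C (h a - (pAnti (q m)).eval a)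
    with hP_def
  have hPderiv : ∀ m, (P m).derivative = q m := by
    intro m
    rw [hP_def]
    simp [derivative_pAnti]
  have hPa : ∀ m, (P m).eval a = h a := by
    intro m
    rw [hP_def]
    simp
  -- eigenvalue window for each t ∈ s
  have hwin' : ∀ t ∈ s, ∀ i, (hHt t).eigenvalues i ∈ Set.Icc a b := fun t ht i =>
    hwin t ht (hHt t) i
  -- sup bound for P m vs h on [a,b]
  have hPsup : ∀ m, ∀ x ∈ Set.Icc a b, |h x - (P m).eval x| ≤ (b - a) * (1 / (m + 1)) := by
    intro m x hx
    have hax : a ≤ x := hx.1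
    have hsub : Set.uIcc a x ⊆ Set.Icc a b := by
      rw [Set.uIcc_of_le hax]
      exact fun u hu => ⟨hu.1, le_trans hu.2 hx.2⟩
    have hInth : IntervalIntegrable h' MeasureTheory.volume a x :=
      (hcont'.mono hsub).intervalIntegrable
    have hIntq : IntervalIntegrable (fun u => (q m).eval u) MeasureTheory.volume a x :=
      ((q m).continuous_aeval).continuousOn.intervalIntegrable
    have hFTCh : ∫ u in a..x, h' u = h x - h a := by
      apply intervalIntegral.integral_eq_sub_of_hasDerivAt
      · exact fun u hu => hderiv u (hIcc_pos (hsub hu))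
      · exact hInth
    have hFTCq : ∫ u in a..x, (q m).eval u = (P m).eval x - (P m).eval a := by
      apply intervalIntegral.integral_eq_sub_of_hasDerivAt
      · intro u _
        have := (P m).hasDerivAt u
        rwa [hPderiv m] at this
      · exact hIntq
    have key : h x - (P m).eval x = ∫ u in a..x, (h' u - (q m).eval u) := by
      rw [intervalIntegral.integral_sub hInth hIntq, hFTCh, hFTCq, hPa m]
      ring
    rw [key]
    have hbnd : ∀ u ∈ Set.uIoc a x, ‖h' u - (q m).eval u‖ ≤ 1 / (m + 1) := by
      intro u hu
      rw [Set.uIoc_of_le hax] at hu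
      have hu' : u ∈ Set.Icc a b := ⟨le_of_lt hu.1, le_trans hu.2 hx.2⟩
      rw [Real.norm_eq_abs, abs_sub_comm]
      exact le_of_lt (hq m u hu')
    have := intervalIntegral.norm_integral_le_of_norm_le_const hbnd
    rw [Real.norm_eq_abs] at this
    refine le_trans this ?_
    rw [abs_of_nonneg (by linarith : (0:ℝ) ≤ x - a), mul_comm]
    have : x - a ≤ b - a := by linarith [hx.2]
    exact mul_le_mul_of_nonneg_right this (by positivity)
  -- the approximating functions
  set F : ℕ → ℝ → ℝ := fun m t => Matrix.trace (Polynomial.aeval (A + t • C) (P m)) with hF_def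
  set F' : ℕ → ℝ → ℝ := fun m t => Matrix.trace (Polynomial.aeval (A + t • C) (q m) * C)
    with hF'_def
  have hFderiv : ∀ m, ∀ t ∈ s, HasDerivAt (F m) (F' m t) t := by
    intro m t _
    have := trace_aeval_hasDerivAt A C t (P m)
    rwa [hPderiv m] at this
  set G : ℝ → ℝ := fun t => Matrix.trace (cfc h (A + t • C)) with hG_def
  set G' : ℝ → ℝ := fun t => Matrix.trace (cfc h' (A + t • C) * C) with hG'_def
  -- uniform convergence of derivatives
  set KC := ∑ i, ∑ j, |C i j| with hKC
  have hKC0 : (0:ℝ) ≤ KC :=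
    Finset.sum_nonneg fun i _ => Finset.sum_nonneg fun j _ => abs_nonneg _
  have hdiff' : ∀ m, ∀ t ∈ s, |G' t - F' m t| ≤ (d:ℝ) * (1 / (m + 1)) * KC := by
    intro m t ht
    have hXt : IsSelfAdjoint (A + t • C) := hHt t
    have heq : G' t - F' m t
        = Matrix.trace (cfc (fun x => h' x - (q m).eval x) (A + t • C) * C) := by
      rw [hG'_def, hF'_def]
      dsimp only
      rw [← cfc_polynomial (q m) (A + t • C) hXt,
        cfc_sub _ _ _ (contOnSpec _ _) (contOnSpec _ _), Matrix.sub_mul, Matrix.trace_sub]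
    rw [heq]
    refine trace_cfc_mul_abs_le (hHt t) (hwin' t ht) _ (fun x hx => ?_) C
    rw [abs_sub_comm]
    exact le_of_lt (hq m x hx)
  have hUnif : TendstoUniformlyOn F' G' Filter.atTop s := by
    rw [Metric.tendstoUniformlyOn_iff]
    intro ε hε
    have htend : Filter.Tendsto (fun m : ℕ => (d:ℝ) * (1 / (m + 1)) * KC)
        Filter.atTop (nhds 0) := by
      have h1 : Filter.Tendsto (fun m : ℕ => 1 / ((m:ℝ) + 1)) Filter.atTop (nhds 0) :=
        tendsto_one_div_add_atTop_nhds_zero_nat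
      have := (h1.const_mul (d:ℝ)).mul_const KC
      simpa using this
    filter_upwards [htend.eventually (gt_mem_nhds hε)] with m hm t ht
    rw [Real.dist_eq]
    exact lt_of_le_of_lt (hdiff' m t ht) hm
  -- pointwise convergence
  have hPoint : ∀ t ∈ s, Filter.Tendsto (fun m => F m t) Filter.atTop (nhds (G t)) := by
    intro t ht
    have hXt : IsSelfAdjoint (A + t • C) := hHt t
    set K1 := ∑ i : Fin d, ∑ j : Fin d, |(1 : Matrix (Fin d) (Fin d) ℝ) i j| with hK1
    have hbound : ∀ m, dist (F m t) (G t) ≤ (d:ℝ) * ((b - a) * (1 / (m + 1))) * K1 := by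
      intro m
      rw [Real.dist_eq]
      have heq : F m t - G t
          = Matrix.trace (cfc (fun x => (P m).eval x - h x) (A + t • C)
              * (1 : Matrix (Fin d) (Fin d) ℝ)) := by
        rw [hF_def, hG_def]
        dsimp only
        rw [mul_one, ← cfc_polynomial (P m) (A + t • C) hXt,
          cfc_sub _ _ _ (contOnSpec _ _) (contOnSpec _ _), Matrix.trace_sub]
      rw [heq]
      refine trace_cfc_mul_abs_le (hHt t) (hwin' t ht) _ (fun x hx => ?_) 1
      rw [abs_sub_comm]
      exact hPsup m x hx
    rw [tendsto_iff_dist_tendsto_zero]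
    refine squeeze_zero (fun m => dist_nonneg) hbound ?_
    have h1 : Filter.Tendsto (fun m : ℕ => 1 / ((m:ℝ) + 1)) Filter.atTop (nhds 0) :=
      tendsto_one_div_add_atTop_nhds_zero_nat
    have := ((h1.const_mul (b - a)).const_mul (d:ℝ)).mul_const K1
    simpa [mul_assoc] using this
  exact hasDerivAt_of_tendstoUniformlyOn hs hUnif
    (Filter.Eventually.of_forall hFderiv) hPoint ht₀s

lemma conjT_eq_transpose (M : Matrix (Fin d) (Fin d) ℝ) : Mᴴ = Mᵀ := by
  ext i j
  simp [Matrix.conjTranspose_apply]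

lemma fnorm_sq_herm {Y : Matrix (Fin d) (Fin d) ℝ} (hY : Y.IsHermitian) :
    (1/2 : ℝ) * (fnorm (mlog Y))^2
      = Matrix.trace (cfc (fun x => (Real.log x)^2 / 2) Y) := by
  have hsa : IsSelfAdjoint (mlog Y) := cfc_predicate Real.log Y
  have htr0 : (0:ℝ) ≤ Matrix.trace ((mlog Y)ᵀ * mlog Y) := by
    have : Matrix.trace ((mlog Y)ᵀ * mlog Y) = ∑ j, ∑ i, mlog Y i j * mlog Y i j := by
      simp [Matrix.trace, Matrix.diag, Matrix.mul_apply]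
    rw [this]
    exact Finset.sum_nonneg fun j _ => Finset.sum_nonneg fun i _ => mul_self_nonneg _
  have h1 : (fnorm (mlog Y))^2 = Matrix.trace ((mlog Y)ᵀ * mlog Y) := by
    rw [fnorm, Real.sq_sqrt htr0]
  have h2 : (mlog Y)ᵀ = mlog Y := by
    rw [← conjT_eq_transpose]
    exact hsa
  have h3 : mlog Y * mlog Y = cfc (fun x => Real.log x * Real.log x) Y := by
    rw [mlog, ← cfc_mul _ _ Y (contOnSpec _ _) (contOnSpec _ _)]
  have h4 : (fun x => (Real.log x)^2 / 2)
      = fun x => (2⁻¹ : ℝ) • (Real.log x * Real.log x) := by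
    funext x
    rw [smul_eq_mul, sq]
    ring
  rw [h1, h2, h3, h4, cfc_smul (2⁻¹ : ℝ) _ Y (contOnSpec _ _), Matrix.trace_smul]
  rw [smul_eq_mul]
  ring

lemma posdef_conj {S M : Matrix (Fin d) (Fin d) ℝ} (hS : S.PosDef) (hM : M.PosDef) :
    (S * M * S).PosDef := by
  have hherm : (S * M * S).IsHermitian := by
    unfold Matrix.IsHermitian
    rw [Matrix.conjTranspose_mul, Matrix.conjTranspose_mul, hS.1.eq, hM.1.eq, mul_assoc]
  refine Matrix.PosDef.of_dotProduct_mulVec_pos hherm fun v hv => ?_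
  have hSv : S *ᵥ v ≠ 0 := by
    intro hcon
    apply hv
    apply Matrix.mulVec_injective_iff_isUnit.mpr hS.isUnit
    rw [hcon, Matrix.mulVec_zero]
  have key : star v ⬝ᵥ ((S * M * S) *ᵥ v) = star (S *ᵥ v) ⬝ᵥ (M *ᵥ (S *ᵥ v)) := by
    rw [← Matrix.mulVec_mulVec, ← Matrix.mulVec_mulVec]
    rw [star_trivial, star_trivial, dotProduct_mulVec]
    congr 1
    rw [(Matrix.mulVec_transpose S v).symm, ← conjT_eq_transpose, hS.1.eq]
  rw [key]
  exact hM.dotProduct_mulVec_pos hSv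

lemma cfc_inv_eq {X : Matrix (Fin d) (Fin d) ℝ} (hX : X.PosDef) :
    cfc (fun x : ℝ => x⁻¹) X = X⁻¹ := by
  have hsa : IsSelfAdjoint X := hX.1
  have hspecpos : ∀ x ∈ spectrum ℝ X, (0:ℝ) < x := by
    intro x hx
    rw [Matrix.IsHermitian.spectrum_real_eq_range_eigenvalues hX.1] at hx
    obtain ⟨i, rfl⟩ := hx
    exact hX.eigenvalues_pos i
  have hinv : X * cfc (fun x : ℝ => x⁻¹) X = 1 := by
    have hid : X * cfc (fun x : ℝ => x⁻¹) X
        = cfc (fun x : ℝ => x) X * cfc (fun x : ℝ => x⁻¹) X := by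
      rw [cfc_id' ℝ X hsa]
    rw [hid, ← cfc_mul _ _ X (contOnSpec _ _) (contOnSpec _ _)]
    have : (spectrum ℝ X).EqOn (fun x => x * x⁻¹) (1 : ℝ → ℝ) := by
      intro x hx
      simp [mul_inv_cancel₀ (ne_of_gt (hspecpos x hx))]
    rw [cfc_congr this]
    exact cfc_one ℝ X hsa
  exact (Matrix.inv_eq_right_inv hinv).symm

lemma cfc_logdiv {X : Matrix (Fin d) (Fin d) ℝ} (hX : X.PosDef) :
    cfc (fun x : ℝ => Real.log x / x) X = mlog X * X⁻¹ := by
  have h1 : (fun x : ℝ => Real.log x / x) = fun x : ℝ => Real.log x * x⁻¹ := by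
    funext x
    rw [div_eq_mul_inv]
  rw [h1, cfc_mul _ _ X (contOnSpec _ _) (contOnSpec _ _), cfc_inv_eq hX, mlog]

theorem stmt_17 {d n : ℕ} (S : Matrix (Fin d) (Fin d) ℝ) (hS : S.PosDef)
    (B : Fin n → Matrix (Fin d) (Fin d) ℝ) (hB : ∀ i, (B i).PosDef)
    (lam : ℝ) (hlam : 0 ≤ lam) (α : Fin n → ℝ)
    (hα : (∑ i, α i • B i).PosDef) (p : Fin n) :
    HasDerivAt
      (fun t : ℝ =>
        (1/2) * (fnorm (mlog (S * (∑ i, Function.update α p t i • B i) * S)))^2 +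
          lam * ∑ i, Function.update α p t i)
      (Matrix.trace (mlog (S * (∑ i, α i • B i) * S) *
        (S * (∑ i, α i • B i) * S)⁻¹ * S * B p * S) + lam) (α p) := by
  obtain ⟨A, hA_def⟩ : ∃ A', A' = S * (∑ i ∈ Finset.univ.erase p, α i • B i) * S := ⟨_, rfl⟩
  obtain ⟨C, hC_def⟩ : ∃ C', C' = S * B p * S := ⟨_, rfl⟩
  have hsum : ∀ t : ℝ, (∑ i, Function.update α p t i • B i)
      = t • B p + ∑ i ∈ Finset.univ.erase p, α i • B i := by
    intro t
    rw [← Finset.add_sum_erase Finset.univ (fun i => Function.update α p t i • B i)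
      (Finset.mem_univ p)]
    congr 1
    · rw [Function.update_self]
    · exact Finset.sum_congr rfl fun i hi => by
        rw [Function.update_of_ne (Finset.ne_of_mem_erase hi)]
  have hXform : ∀ t : ℝ, S * (∑ i, Function.update α p t i • B i) * S = A + t • C := by
    intro t
    rw [hsum t, hA_def, hC_def, Matrix.mul_add, Matrix.add_mul, mul_smul_comm, smul_mul_assoc,
      add_comm]
  have hX₀ : A + (α p) • C = S * (∑ i, α i • B i) * S := by
    rw [← hXform (α p)]
    congr 2
    exact Finset.sum_congr rfl fun i _ => by rw [Function.update_eq_self]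
  have hermS : S.IsHermitian := hS.1
  have hAh : A.IsHermitian := by
    rw [hA_def]
    unfold Matrix.IsHermitian
    rw [Matrix.conjTranspose_mul, Matrix.conjTranspose_mul, hermS.eq, mul_assoc]
    congr 1
    have : (∑ i ∈ Finset.univ.erase p, α i • B i).IsHermitian := by
      unfold Matrix.IsHermitian
      rw [Matrix.conjTranspose_sum]
      refine Finset.sum_congr rfl fun i _ => ?_
      rw [Matrix.conjTranspose_smul, (hB i).1.eq]
      simp
    rw [this.eq]
  have hCh : C.IsHermitian := by
    rw [hC_def]
    unfold Matrix.IsHermitian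
    rw [Matrix.conjTranspose_mul, Matrix.conjTranspose_mul, hermS.eq, (hB p).1.eq, mul_assoc]
  have hX₀PD : (A + (α p) • C).PosDef := by
    rw [hX₀]
    exact posdef_conj hS hα
  have hderiv : ∀ x ∈ Set.Ioi (0:ℝ), HasDerivAt (fun x : ℝ => (Real.log x)^2/2)
      (Real.log x / x) x := by
    intro x hx
    have hx0 : x ≠ 0 := ne_of_gt hx
    have h2 := ((Real.hasDerivAt_log hx0).pow 2).div_const 2
    refine h2.congr_deriv ?_
    rw [pow_one]
    field_simp
    ring
  have hcont : ContinuousOn (fun x : ℝ => Real.log x / x) (Set.Ioi 0) := by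
    apply ContinuousOn.div
    · exact Real.continuousOn_log.mono fun x hx => ne_of_gt hx
    · exact continuousOn_id
    · exact fun x hx => ne_of_gt hx
  have hmain := main_deriv A C hAh hCh (α p) hX₀PD _ _ hderiv hcont
  have hsum2 : ∀ t : ℝ, (∑ i, Function.update α p t i)
      = t + ∑ i ∈ Finset.univ.erase p, α i := by
    intro t
    rw [← Finset.add_sum_erase Finset.univ (fun i => Function.update α p t i)
      (Finset.mem_univ p)]
    congr 1
    · rw [Function.update_self]
    · exact Finset.sum_congr rfl fun i hi => by
        rw [Function.update_of_ne (Finset.ne_of_mem_erase hi)]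
  have hlamd : HasDerivAt (fun t : ℝ => lam * (t + ∑ i ∈ Finset.univ.erase p, α i))
      lam (α p) := by
    have := ((hasDerivAt_id (α p)).add_const (∑ i ∈ Finset.univ.erase p, α i)).const_mul lam
    simpa using this
  have hcomb := hmain.add hlamd
  have hfun : (fun t : ℝ =>
        (1/2) * (fnorm (mlog (S * (∑ i, Function.update α p t i • B i) * S)))^2 +
          lam * ∑ i, Function.update α p t i)
      = fun t : ℝ => Matrix.trace (cfc (fun x : ℝ => (Real.log x)^2/2) (A + t • C))
          + lam * (t + ∑ i ∈ Finset.univ.erase p, α i) := by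
    funext t
    rw [hXform t, hsum2 t, fnorm_sq_herm (hermitian_family hAh hCh t)]
  rw [hfun]
  refine hcomb.congr_deriv ?_
  symm
  congr 1
  rw [← hX₀, cfc_logdiv hX₀PD, hC_def, ← mul_assoc, ← mul_assoc]
end
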